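/- The complete tripartite graph K_{2,2,2} (the octahedron) is not a double approval graph. -/

import Mathlib

/-- An approval interval: a closed interval `[l, r]` with an approval mark
`a`, `l < a < r`. -/
structure ApprovalInterval where
  l : ℝ
  a : ℝ
  r : ℝ
  hla : l < a
  har : a < r

/-- The intervals of `x` and `y` intersect. -/
def AIntersect (x y : ApprovalInterval) : Prop :=
  y.l ≤ x.r ∧ x.l ≤ y.r

/-- Single approval adjacency: the intervals intersect and the intersection
contains exactly one of the two approval marks. -/
def SAAdj (x y : ApprovalInterval) : Prop :=
  AIntersect x y ∧
    Xor' (y.l ≤ x.a ∧ x.a ≤ y.r) (x.l ≤ y.a ∧ y.a ≤ x.r)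

/-- Double approval adjacency: the intervals intersect and the intersection
contains both approval marks. -/
def DAAdj (x y : ApprovalInterval) : Prop :=
  AIntersect x y ∧ (y.l ≤ x.a ∧ x.a ≤ y.r) ∧ (x.l ≤ y.a ∧ y.a ≤ x.r)

/-- `G` is a single approval graph. -/
def IsSAGraph {V : Type*} (G : SimpleGraph V) : Prop :=
  ∃ f : V → ApprovalInterval, ∀ a b : V, G.Adj a b ↔ SAAdj (f a) (f b)

/-- `G` is a double approval graph. -/
def IsDAGraph {V : Type*} (G : SimpleGraph V) : Prop :=
  ∃ f : V → ApprovalInterval, ∀ a b : V, G.Adj a b ↔ a ≠ b ∧ DAAdj (f a) (f b)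

/-- The complete tripartite graph `K_{2,2,2}` (the octahedron): vertices
`{0,1}`, `{2,3}`, `{4,5}` are the three parts, and two vertices are adjacent
iff they lie in different parts. -/
def octahedron : SimpleGraph (Fin 6) where
  Adj i j := (i : ℕ) / 2 ≠ (j : ℕ) / 2
  symm := ⟨fun _ _ h => Ne.symm h⟩
  loopless := ⟨fun _ h => h rfl⟩

lemma not_da_cases {x y : ApprovalInterval} (h : ¬ DAAdj x y) :
    x.a < y.l ∨ y.r < x.a ∨ y.a < x.l ∨ x.r < y.a := by
  by_contra hc
  push_neg at hc
  obtain ⟨h1, h2, h3, h4⟩ := hc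
  exact h ⟨⟨le_trans h1 x.har.le, le_trans h3 y.har.le⟩, ⟨h1, h2⟩, ⟨h3, h4⟩⟩

/-- `K_{2,2,2}` is not a double approval graph. -/
theorem stmt_18 : ¬ IsDAGraph octahedron := by
  rintro ⟨f, hf⟩
  have adj : ∀ i j : Fin 6, ((i : ℕ) / 2 ≠ (j : ℕ) / 2) → DAAdj (f i) (f j) := by
    intro i j h
    exact ((hf i j).mp h).2
  have nadj : ∀ i j : Fin 6, i ≠ j → ((i : ℕ) / 2 = (j : ℕ) / 2) → ¬ DAAdj (f i) (f j) := by
    intro i j hne h hd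
    exact ((hf i j).mpr ⟨hne, hd⟩) h
  obtain ⟨-, ⟨hL02, hR02⟩, ⟨hL20, hR20⟩⟩ := adj 0 2 (by decide)
  obtain ⟨-, ⟨hL03, hR03⟩, ⟨hL30, hR30⟩⟩ := adj 0 3 (by decide)
  obtain ⟨-, ⟨hL04, hR04⟩, ⟨hL40, hR40⟩⟩ := adj 0 4 (by decide)
  obtain ⟨-, ⟨hL05, hR05⟩, ⟨hL50, hR50⟩⟩ := adj 0 5 (by decide)
  obtain ⟨-, ⟨hL12, hR12⟩, ⟨hL21, hR21⟩⟩ := adj 1 2 (by decide)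
  obtain ⟨-, ⟨hL13, hR13⟩, ⟨hL31, hR31⟩⟩ := adj 1 3 (by decide)
  obtain ⟨-, ⟨hL14, hR14⟩, ⟨hL41, hR41⟩⟩ := adj 1 4 (by decide)
  obtain ⟨-, ⟨hL15, hR15⟩, ⟨hL51, hR51⟩⟩ := adj 1 5 (by decide)
  obtain ⟨-, ⟨hL24, hR24⟩, ⟨hL42, hR42⟩⟩ := adj 2 4 (by decide)
  obtain ⟨-, ⟨hL25, hR25⟩, ⟨hL52, hR52⟩⟩ := adj 2 5 (by decide)
  obtain ⟨-, ⟨hL34, hR34⟩, ⟨hL43, hR43⟩⟩ := adj 3 4 (by decide)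
  obtain ⟨-, ⟨hL35, hR35⟩, ⟨hL53, hR53⟩⟩ := adj 3 5 (by decide)
  have n01 := not_da_cases (nadj 0 1 (by decide) (by decide))
  have n23 := not_da_cases (nadj 2 3 (by decide) (by decide))
  have n45 := not_da_cases (nadj 4 5 (by decide) (by decide))
  rcases n01 with h1 | h1 | h1 | h1 <;>
    rcases n23 with h2 | h2 | h2 | h2 <;>
      rcases n45 with h3 | h3 | h3 | h3 <;>
        linarith
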